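/- Suppose f(z) ∈ K[[z]] and there exist power series f_y(z) ∈ K[[z]] with f_0 = f satisfying f_y(z) = Σ_{i=1}^{d} a_{y,i}(z) f_{y+i}(z^{k^i}) for all y ≥ 0, where the a_{y,i}(z) ∈ K[z] have degrees uniformly bounded by L. Choose s with k·s ≤ s + L ≤ k·s + k − 1. Then for all y ≥ 0 and 0 ≤ j ≤ s, the product z^j f_y(z) can be written as Σ_{i=1}^{d} Σ_{t=0}^{s} p_{t,i}(z) z^{k·t} f_{y+i}(z^{k^i}) with polynomials p_{t,i}(z) ∈ K[z] of degree at most k − 1. -/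

import Mathlib

/-- Substitution `z ↦ z^m` on formal power series, defined coefficientwise. -/
noncomputable def powSubst {K : Type*} [Field K] (m : ℕ) (f : PowerSeries K) :
    PowerSeries K :=
  PowerSeries.mk fun n => if m ∣ n then PowerSeries.coeff (R := K) (n / m) f else 0

open Polynomial Finset

lemma digit_decomp {K : Type*} [Field K] (k s : ℕ) (hk : 0 < k) (q : Polynomial K)
    (hq : q.natDegree < k * (s + 1)) :
    ∑ t ∈ range (s + 1),
      (∑ r ∈ range k, C (q.coeff (k * t + r)) * X ^ r) * X ^ (k * t) = q := by
  conv_rhs => rw [q.as_sum_range' (k * (s + 1)) hq]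
  have h1 : ∀ t ∈ range (s+1),
      (∑ r ∈ range k, C (q.coeff (k * t + r)) * X ^ r) * X ^ (k * t)
      = ∑ r ∈ range k, (monomial (k * t + r) (q.coeff (k * t + r)) : Polynomial K) := by
    intro t _
    rw [Finset.sum_mul]
    refine Finset.sum_congr rfl fun r _ => ?_
    rw [mul_assoc, ← pow_add, C_mul_X_pow_eq_monomial]
    rw [add_comm r (k*t)]
  rw [Finset.sum_congr rfl h1, ← Finset.sum_product']
  refine Finset.sum_nbij' (fun p => k * p.1 + p.2) (fun n => (n / k, n % k)) ?_ ?_ ?_ ?_ ?_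
  · rintro ⟨t, r⟩ hp
    simp only [Finset.mem_product, Finset.mem_range] at hp ⊢
    nlinarith [hp.1, hp.2]
  · intro n hn
    simp only [Finset.mem_range] at hn
    simp only [Finset.mem_product, Finset.mem_range]
    constructor
    · exact Nat.div_lt_of_lt_mul (by omega)
    · exact Nat.mod_lt _ hk
  · rintro ⟨t, r⟩ hp
    simp only [Finset.mem_product, Finset.mem_range] at hp
    simp [Nat.mul_add_div hk, Nat.div_eq_of_lt hp.2, Nat.mul_add_mod, Nat.mod_eq_of_lt hp.2]
  · intro n _; simp [Nat.div_add_mod]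
  · intro p _; rfl

/-- Key step for k-chain Mahler functions with uniformly bounded polynomial coefficients:
if `f y = ∑_{i=1}^d a_{y,i}(z) · f_{y+i}(z^{k^i})` with `deg a_{y,i} ≤ L`, and `s`
satisfies `k s ≤ s + L ≤ k s + k - 1`, then each `z^j f_y` (for `j ≤ s`) can be written
as `∑_{i=1}^d ∑_{t=0}^s p_{t,i}(z) z^{k t} f_{y+i}(z^{k^i})` with `deg p_{t,i} ≤ k - 1`. -/
theorem chainMahler_decomposition {K : Type*} [Field K] {k d L s : ℕ} (hk : 2 ≤ k)
    (hd : 1 ≤ d) (hs1 : k * s ≤ s + L) (hs2 : s + L ≤ k * s + k - 1)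
    (A : ℕ → ℕ → Polynomial K) (hA : ∀ y i, (A y i).natDegree ≤ L)
    (f : ℕ → PowerSeries K)
    (hf : ∀ y : ℕ, f y = ∑ i ∈ Finset.range d,
      ((A y (i + 1) : Polynomial K) : PowerSeries K) * powSubst (k ^ (i + 1)) (f (y + i + 1))) :
    ∀ y : ℕ, ∀ j : ℕ, j ≤ s →
      ∃ p : ℕ → ℕ → Polynomial K, (∀ t i, (p t i).natDegree ≤ k - 1) ∧
        (PowerSeries.X : PowerSeries K) ^ j * f y =
          ∑ i ∈ Finset.range d, ∑ t ∈ Finset.range (s + 1),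
            ((p t (i + 1) : Polynomial K) : PowerSeries K) * PowerSeries.X ^ (k * t) *
              powSubst (k ^ (i + 1)) (f (y + i + 1)) := by
  intro y j hj
  set q : ℕ → Polynomial K := fun i => X ^ j * A y i with hq
  refine ⟨fun t i => ∑ r ∈ range k, C ((q i).coeff (k * t + r)) * X ^ r, ?_, ?_⟩
  · intro t i
    refine Polynomial.natDegree_sum_le_of_forall_le _ _ fun r hr => ?_
    calc (C ((q i).coeff (k * t + r)) * X ^ r).natDegree
        ≤ (C ((q i).coeff (k * t + r))).natDegree + (X ^ r : Polynomial K).natDegree :=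
          natDegree_mul_le
      _ ≤ 0 + r := by
          gcongr
          · exact le_of_eq (natDegree_C _)
          · exact natDegree_X_pow_le r
      _ ≤ k - 1 := by simp only [Finset.mem_range] at hr; omega
  · have hdeg : ∀ i, (q i).natDegree < k * (s + 1) := by
      intro i
      have h1 : (q i).natDegree ≤ j + (A y i).natDegree :=
        le_trans natDegree_mul_le (by gcongr; exact natDegree_X_pow_le j)
      have h2 := hA y i
      have hks : k * (s + 1) = k * s + k := by ring
      omega
    have key : ∀ i, ((q i : Polynomial K) : PowerSeries K)
        = ∑ t ∈ range (s + 1),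
          ((∑ r ∈ range k, C ((q i).coeff (k * t + r)) * X ^ r : Polynomial K) :
            PowerSeries K) * PowerSeries.X ^ (k * t) := by
      intro i
      conv_lhs => rw [← digit_decomp k s (by omega) (q i) (hdeg i)]
      rw [← Polynomial.coeToPowerSeries.ringHom_apply, map_sum]
      refine Finset.sum_congr rfl fun t _ => ?_
      rw [map_mul, map_pow, Polynomial.coeToPowerSeries.ringHom_apply,
        Polynomial.coeToPowerSeries.ringHom_apply, Polynomial.coe_X]
    rw [hf y, Finset.mul_sum]
    refine Finset.sum_congr rfl fun i _ => ?_
    rw [← mul_assoc]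
    have hXA : (PowerSeries.X : PowerSeries K) ^ j * ((A y (i+1) : Polynomial K) : PowerSeries K)
        = ((q (i+1) : Polynomial K) : PowerSeries K) := by
      simp [hq, Polynomial.coe_mul, Polynomial.coe_pow, Polynomial.coe_X]
    rw [hXA, key (i+1), Finset.sum_mul]
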